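/- arXiv:1705.09038 — 2 statements merged into one kernel-verified Lean document; each statement's English description precedes it below -/
import Mathlib

section
/- Let M be a unimodular lattice over ℤ and N ⊆ M a saturated nondegenerate sublattice with orthogonal complement N^⊥. Then N + N^⊥ has finite index in M equal to |disc(N)|, and |disc(N^⊥)| = |disc(N)|. -/
open Submodule Matrix in
private lemma cardQuotRangeZero {s : ℕ} (A : Matrix (Fin s) (Fin s) ℤ) (hA : A.det = 0) :
    Nat.card ((Fin s → ℤ) ⧸ LinearMap.range (Matrix.toLin' A)) = A.det.natAbs := by
  classical
  rw [hA, Int.natAbs_zero]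
  obtain ⟨u, hu, hAu⟩ := Matrix.exists_vecMul_eq_zero_iff.mpr hA
  obtain ⟨i, hi⟩ := Function.ne_iff.mp hu
  replace hi : u i ≠ 0 := by simpa using hi
  have hinj : Function.Injective (fun k : ℤ =>
      Submodule.Quotient.mk (p := LinearMap.range (Matrix.toLin' A)) (k • Pi.single i 1)) := by
    intro k l hkl
    have hmem : (k - l) • (Pi.single i 1 : Fin s → ℤ) ∈ LinearMap.range (Matrix.toLin' A) := by
      rw [sub_smul]
      exact (Submodule.Quotient.eq _).mp hkl
    obtain ⟨x, hx⟩ := hmem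
    have h0 : u ⬝ᵥ ((k - l) • (Pi.single i 1 : Fin s → ℤ)) = 0 := by
      rw [← hx, Matrix.toLin'_apply, Matrix.dotProduct_mulVec, hAu, zero_dotProduct]
    have h1 : (k - l) * u i = 0 := by
      rw [dotProduct_smul, dotProduct_single, mul_one, smul_eq_mul] at h0; exact h0
    rcases mul_eq_zero.mp h1 with h | h
    · linarith [sub_eq_zero.mp h]
    · exact absurd h hi
  haveI : Infinite ((Fin s → ℤ) ⧸ LinearMap.range (Matrix.toLin' A)) :=
    Infinite.of_injective _ hinj
  exact Nat.card_eq_zero_of_infinite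

open Submodule Matrix in
private lemma cardQuotRangeNZ {s : ℕ} (A : Matrix (Fin s) (Fin s) ℤ) (hA : A.det ≠ 0) :
    Nat.card ((Fin s → ℤ) ⧸ LinearMap.range (Matrix.toLin' A)) = A.det.natAbs := by
  classical
  have hinj : Function.Injective (Matrix.toLin' A) := by
    intro v w h
    by_contra hne
    apply hA
    rw [← Matrix.exists_mulVec_eq_zero_iff]
    refine ⟨v - w, sub_ne_zero.mpr hne, ?_⟩
    have : A *ᵥ v = A *ᵥ w := by
      simpa [Matrix.toLin'_apply] using h
    rw [Matrix.mulVec_sub, this, sub_self]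
  set P := LinearMap.range (Matrix.toLin' A) with hP
  let E : (Fin s → ℤ) ≃ₗ[ℤ] P := LinearEquiv.ofInjective _ hinj
  obtain ⟨m, snf⟩ := P.smithNormalForm (Pi.basisFun ℤ (Fin s))
  have hm : m = s := by
    have e := snf.bN.indexEquiv ((Pi.basisFun ℤ (Fin s)).map E)
    simpa using Fintype.card_congr e
  subst hm
  set b := snf.bM with hb
  set a := snf.a with ha
  have hgbij : Function.Bijective snf.f := (Finite.injective_iff_bijective).mp snf.f.injective
  set g := Equiv.ofBijective snf.f hgbij with hg
  have hgf : ∀ i, g i = snf.f i := fun i => rfl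
  -- membership characterization
  have mem_P_iff : ∀ x, x ∈ P ↔ ∀ j, a (g.symm j) ∣ b.repr x j := by
    intro x
    constructor
    · intro hx j
      have h1 := snf.repr_apply_embedding_eq_repr_smul (m := ⟨x, hx⟩) (i := g.symm j)
      have h2 : snf.f (g.symm j) = j := by rw [← hgf, Equiv.apply_symm_apply]
      rw [h2] at h1
      have h3 : (snf.bN.repr (snf.a (g.symm j) • ⟨x, hx⟩)) (g.symm j)
          = a (g.symm j) * (snf.bN.repr ⟨x, hx⟩) (g.symm j) := by
        rw [_root_.map_smul]; simp [smul_eq_mul, ha]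
      rw [h1, h3]
      exact dvd_mul_right _ _
    · intro hdvd
      choose c hc using hdvd
      have hx : x = ↑(∑ i, c (g i) • snf.bN i) := by
        rw [Submodule.coe_sum]
        simp_rw [SetLike.val_smul]
        apply b.ext_elem
        intro j
        rw [hc j]
        simp only [map_sum, _root_.map_smul, snf.snf, ← hb, Module.Basis.repr_self,
          Finsupp.finset_sum_apply, Finsupp.smul_apply, Finsupp.single_apply, smul_eq_mul,
          mul_ite, mul_one, mul_zero]
        rw [Finset.sum_eq_single (g.symm j)]
        · have h2 : snf.f (g.symm j) = j := by rw [← hgf, Equiv.apply_symm_apply]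
          rw [h2, Equiv.apply_symm_apply, if_pos rfl, mul_comm]
        · intro i _ hne
          have hfij : ¬ (snf.f i = j) := by
            rw [← hgf]; intro hcon; exact hne (by rw [← hcon, Equiv.symm_apply_apply])
          rw [if_neg hfij]
        · intro h; exact absurd (Finset.mem_univ _) h
      rw [hx]
      exact SetLike.coe_mem _
  -- map through equivFun
  set P' : Submodule ℤ (Fin m → ℤ) :=
    Submodule.pi Set.univ (fun j => Ideal.span ({a (g.symm j)} : Set ℤ)) with hP'
  have hmap : Submodule.map (b.equivFun : (Fin m → ℤ) →ₗ[ℤ] (Fin m → ℤ)) P = P' := by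
    ext y
    simp only [Submodule.mem_map, LinearEquiv.coe_coe, hP', Submodule.mem_pi, Set.mem_univ,
      forall_true_left, Ideal.mem_span_singleton]
    constructor
    · rintro ⟨x, hx, rfl⟩ j
      have := (mem_P_iff x).mp hx j
      simpa [Module.Basis.equivFun_apply] using this
    · intro hy
      refine ⟨b.equivFun.symm y, ?_, b.equivFun.apply_symm_apply y⟩
      rw [mem_P_iff]
      intro j
      have : b.repr (b.equivFun.symm y) j = y j := by
        have := b.equivFun.apply_symm_apply y
        calc b.repr (b.equivFun.symm y) j = b.equivFun (b.equivFun.symm y) j := rfl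
        _ = y j := by rw [this]
      rw [this]; exact hy j
  let q1 := Submodule.Quotient.equiv P P' (b.equivFun) hmap
  let q2 := Submodule.quotientPi (fun j => Ideal.span ({a (g.symm j)} : Set ℤ))
  have hcard : Nat.card ((Fin m → ℤ) ⧸ P) = ∏ j, (a (g.symm j)).natAbs := by
    rw [Nat.card_congr (q1.trans q2).toEquiv, Nat.card_pi]
    refine Finset.prod_congr rfl fun j _ => ?_
    rw [Nat.card_congr (Int.quotientSpanEquivZMod (a (g.symm j))).toEquiv, Nat.card_zmod]
  -- determinant computation
  let e' : (Fin m → ℤ) ≃ₗ[ℤ] P := b.equiv snf.bN g.symm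
  have hdet1 : A.det = LinearMap.det (P.subtype ∘ₗ (E : (Fin m → ℤ) →ₗ[ℤ] P)) := by
    have hco : (P.subtype ∘ₗ (E :  (Fin m → ℤ) →ₗ[ℤ] P)) = Matrix.toLin' A := by
      ext x; rfl
    rw [hco, LinearMap.det_toLin']
  have hassoc : Associated (LinearMap.det (P.subtype ∘ₗ (E : (Fin m → ℤ) →ₗ[ℤ] P)))
      (LinearMap.det (P.subtype ∘ₗ (e' : (Fin m → ℤ) →ₗ[ℤ] P))) :=
    LinearMap.associated_det_comp_equiv _ _ _
  have htm : LinearMap.toMatrix b b (P.subtype ∘ₗ (e' : (Fin m → ℤ) →ₗ[ℤ] P)) =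
      Matrix.diagonal (fun j => a (g.symm j)) := by
    ext i j
    rw [LinearMap.toMatrix_apply]
    have hco : (P.subtype ∘ₗ (e' : (Fin m → ℤ) →ₗ[ℤ] P)) (b j) = a (g.symm j) • b j := by
      simp only [LinearMap.coe_comp, Function.comp_apply, LinearEquiv.coe_coe,
        Submodule.coe_subtype]
      have : e' (b j) = snf.bN (g.symm j) := b.equiv_apply _ _ _
      rw [this, snf.snf]
      congr 1
      rw [← hgf, Equiv.apply_symm_apply]
    rw [hco, _root_.map_smul, Module.Basis.repr_self, Finsupp.smul_apply, Finsupp.single_apply,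
      smul_eq_mul]
    by_cases h : j = i
    · subst h; simp [Matrix.diagonal_apply_eq]
    · simp [Matrix.diagonal_apply_ne, h, Ne.symm h]
  have hdet2 : LinearMap.det (P.subtype ∘ₗ (e' : (Fin m → ℤ) →ₗ[ℤ] P)) =
      ∏ j, a (g.symm j) := by
    rw [← LinearMap.det_toMatrix b, htm, Matrix.det_diagonal]
  calc Nat.card ((Fin m → ℤ) ⧸ P) = ∏ j, (a (g.symm j)).natAbs := hcard
    _ = (∏ j, a (g.symm j)).natAbs := (map_prod Int.natAbsHom _ _).symm
    _ = A.det.natAbs := by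
        rw [← hdet2, hdet1]
        exact (Int.natAbs_eq_iff_associated.mpr hassoc).symm

open Submodule Matrix in
private lemma auxEquiv {n : ℕ} (B : (Fin n → ℤ) →ₗ[ℤ] (Fin n → ℤ) →ₗ[ℤ] ℤ)
    (hunimod : Function.Bijective (B : (Fin n → ℤ) → ((Fin n → ℤ) →ₗ[ℤ] ℤ)))
    (S T : Submodule ℤ (Fin n → ℤ))
    (hsat : ∀ (m : Fin n → ℤ) (k : ℤ), k ≠ 0 → k • m ∈ S → m ∈ S)
    (hT : ∀ m, m ∈ T ↔ ∀ x ∈ S, B m x = 0)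
    {s : ℕ} (bS : Module.Basis (Fin s) ℤ S) :
    Nonempty (((Fin n → ℤ) ⧸ (S ⊔ T)) ≃ₗ[ℤ] ((Fin s → ℤ) ⧸
      LinearMap.range (Matrix.toLin' (Matrix.of fun i j => B (bS i : Fin n → ℤ) (bS j : Fin n → ℤ))ᵀ))) := by
  classical
  set V := Fin n → ℤ
  let φ : V →ₗ[ℤ] Module.Dual ℤ S := S.subtype.dualMap ∘ₗ B
  have hker : LinearMap.ker φ = T := by
    ext m
    rw [LinearMap.mem_ker, hT]
    constructor
    · intro h x hx
      have := congrArg (fun f => f ⟨x, hx⟩) h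
      simpa [φ] using this
    · intro h
      ext x
      simpa [φ] using h x x.2
  -- surjectivity of φ
  have hsurj : Function.Surjective φ := by
    -- M ⧸ S is torsion-free, finite, hence free, hence projective; split the quotient map
    haveI : NoZeroSMulDivisors ℤ (V ⧸ S) := by
      refine ⟨fun {k q} hkq => ?_⟩
      by_cases hk : k = 0
      · exact Or.inl hk
      · refine Or.inr ?_
        obtain ⟨m, rfl⟩ := Submodule.Quotient.mk_surjective S q
        have : k • m ∈ S := by
          rwa [← Submodule.Quotient.mk_eq_zero, Submodule.Quotient.mk_smul]
        rw [Submodule.Quotient.mk_eq_zero]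
        exact hsat m k hk this
    obtain ⟨sec, hsec⟩ := Module.projective_lifting_property S.mkQ (LinearMap.id) 
      (Submodule.Quotient.mk_surjective S)
    intro f
    have hproj : ∀ m : V, m - sec (S.mkQ m) ∈ S := by
      intro m
      rw [← Submodule.Quotient.mk_eq_zero]
      have : S.mkQ (sec (S.mkQ m)) = S.mkQ m := by
        have := congrArg (fun g => g (S.mkQ m)) hsec
        simpa using this
      simp only [Submodule.Quotient.mk_sub]
      change S.mkQ m - S.mkQ (sec (S.mkQ m)) = 0
      rw [this, sub_self]
    let proj : V →ₗ[ℤ] S := LinearMap.codRestrict S (LinearMap.id - sec ∘ₗ S.mkQ)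
      (fun m => by simpa using hproj m)
    obtain ⟨m, hm⟩ := hunimod.2 (f ∘ₗ proj)
    refine ⟨m, ?_⟩
    ext x
    have hmk0 : S.mkQ (x : V) = 0 := by
      rw [Submodule.mkQ_apply, Submodule.Quotient.mk_eq_zero]; exact x.2
    have hx : proj (x : V) = x := by
      apply Subtype.ext
      change (x : V) - sec (S.mkQ (x : V)) = (x : V)
      rw [hmk0, map_zero, sub_zero]
    calc φ m x = B m x := rfl
      _ = (f ∘ₗ proj) x := by rw [hm]
      _ = f x := by rw [LinearMap.comp_apply, hx]
  -- quotient equivalence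
  have hle : T ≤ LinearMap.ker φ := hker.ge
  set ψ := T.liftQ φ hle with hψ
  have hbij : Function.Bijective ψ := by
    constructor
    · rw [← LinearMap.ker_eq_bot, Submodule.ker_liftQ_eq_bot]
      exact hker.le
    · intro f
      obtain ⟨m, hm⟩ := hsurj f
      exact ⟨T.mkQ m, by rwa [hψ, Submodule.mkQ_apply, Submodule.liftQ_apply]⟩
  let e : (V ⧸ T) ≃ₗ[ℤ] Module.Dual ℤ S := LinearEquiv.ofBijective ψ hbij
  have hmap1 : Submodule.map (e : (V ⧸ T) →ₗ[ℤ] Module.Dual ℤ S) (Submodule.map T.mkQ S)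
      = LinearMap.range (φ ∘ₗ S.subtype) := by
    rw [← Submodule.map_comp]
    have hcoe : (e : (V ⧸ T) →ₗ[ℤ] Module.Dual ℤ S) ∘ₗ T.mkQ = φ := by
      refine LinearMap.ext fun m => ?_
      change ψ (T.mkQ m) = φ m
      rw [Submodule.mkQ_apply, Submodule.liftQ_apply]
    rw [hcoe, LinearMap.range_comp, Submodule.range_subtype]
  let e1 : S ≃ₗ[ℤ] (Fin s → ℤ) := bS.equivFun
  let e2 : Module.Dual ℤ S ≃ₗ[ℤ] (Fin s → ℤ) := bS.dualBasis.equivFun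
  set G := (Matrix.of fun i j => B (bS i : V) (bS j : V)) with hG
  have hcomm : (e2 : Module.Dual ℤ S →ₗ[ℤ] (Fin s → ℤ)) ∘ₗ (φ ∘ₗ S.subtype)
      = Matrix.toLin' Gᵀ ∘ₗ (e1 : S →ₗ[ℤ] (Fin s → ℤ)) := by
    apply bS.ext
    intro i
    funext j
    have lhs : ((e2 : Module.Dual ℤ S →ₗ[ℤ] (Fin s → ℤ)) ∘ₗ (φ ∘ₗ S.subtype)) (bS i) j
        = B (bS i : V) (bS j : V) := by
      simp only [LinearMap.coe_comp, Function.comp_apply, LinearEquiv.coe_coe,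
        Submodule.coe_subtype]
      change bS.dualBasis.equivFun (φ (bS i : V)) j = _
      rw [Module.Basis.equivFun_apply, Module.Basis.dualBasis_repr]
      rfl
    rw [lhs]
    simp only [LinearMap.coe_comp, Function.comp_apply, LinearEquiv.coe_coe]
    change _ = Matrix.toLin' Gᵀ (bS.equivFun (bS i)) j
    rw [Matrix.toLin'_apply]
    simp only [Matrix.mulVec, dotProduct, Module.Basis.equivFun_self, mul_ite, mul_one, mul_zero]
    rw [Finset.sum_ite_eq Finset.univ i (fun k => Gᵀ j k)]
    simp [hG]
  have hmap2 : Submodule.map (e2 : Module.Dual ℤ S →ₗ[ℤ] (Fin s → ℤ))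
      (LinearMap.range (φ ∘ₗ S.subtype)) = LinearMap.range (Matrix.toLin' Gᵀ) := by
    rw [← LinearMap.range_comp, hcomm, LinearMap.range_comp, LinearEquiv.range,
      Submodule.map_top]
  let q0 : (V ⧸ (S ⊔ T)) ≃ₗ[ℤ] (V ⧸ (T ⊔ S)) :=
    Submodule.quotEquivOfEq _ _ (sup_comm S T)
  let q1 : ((V ⧸ T) ⧸ (Submodule.map T.mkQ S)) ≃ₗ[ℤ] (V ⧸ (T ⊔ S)) :=
    Submodule.quotientQuotientEquivQuotientSup T S
  let q2 : ((V ⧸ T) ⧸ (Submodule.map T.mkQ S)) ≃ₗ[ℤ]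
      (Module.Dual ℤ S ⧸ LinearMap.range (φ ∘ₗ S.subtype)) :=
    Submodule.Quotient.equiv _ _ e hmap1
  let q3 : (Module.Dual ℤ S ⧸ LinearMap.range (φ ∘ₗ S.subtype)) ≃ₗ[ℤ]
      ((Fin s → ℤ) ⧸ LinearMap.range (Matrix.toLin' Gᵀ)) :=
    Submodule.Quotient.equiv _ _ e2 hmap2
  exact ⟨q0 ≪≫ₗ q1.symm ≪≫ₗ q2 ≪≫ₗ q3⟩


open Submodule Matrix in
private lemma cardQuotRange {s : ℕ} (A : Matrix (Fin s) (Fin s) ℤ) :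
    Nat.card ((Fin s → ℤ) ⧸ LinearMap.range (Matrix.toLin' A)) = A.det.natAbs := by
  by_cases hA : A.det = 0
  · exact cardQuotRangeZero A hA
  · exact cardQuotRangeNZ A hA

/-- For a saturated nondegenerate sublattice `N` of a unimodular lattice `M` with
orthogonal complement `N^⊥`, the index of `N + N^⊥` in `M` equals `|disc N|`, and
`|disc N^⊥| = |disc N|`. -/
theorem stmt12 (n : ℕ) (B : (Fin n → ℤ) →ₗ[ℤ] (Fin n → ℤ) →ₗ[ℤ] ℤ)
    (hsymm : ∀ x y, B x y = B y x)
    (hunimod : Function.Bijective (B : (Fin n → ℤ) → ((Fin n → ℤ) →ₗ[ℤ] ℤ)))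
    (N : Submodule ℤ (Fin n → ℤ))
    (hsat : ∀ (m : Fin n → ℤ) (k : ℤ), k ≠ 0 → k • m ∈ N → m ∈ N)
    (Nperp : Submodule ℤ (Fin n → ℤ))
    (hperp : ∀ m, m ∈ Nperp ↔ ∀ x ∈ N, B m x = 0)
    (r r' : ℕ) (bN : Module.Basis (Fin r) ℤ N) (bP : Module.Basis (Fin r') ℤ Nperp)
    (hnd : (Matrix.of fun i j => B (bN i : Fin n → ℤ) (bN j : Fin n → ℤ)).det ≠ 0) :
    Nat.card ((Fin n → ℤ) ⧸ (N ⊔ Nperp)) =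
      (Matrix.of fun i j => B (bN i : Fin n → ℤ) (bN j : Fin n → ℤ)).det.natAbs ∧
    (Matrix.of fun i j => B (bP i : Fin n → ℤ) (bP j : Fin n → ℤ)).det.natAbs =
      (Matrix.of fun i j => B (bN i : Fin n → ℤ) (bN j : Fin n → ℤ)).det.natAbs := by
  classical
  obtain ⟨eq1⟩ := auxEquiv B hunimod N Nperp hsat hperp bN
  have hcard1 : Nat.card ((Fin n → ℤ) ⧸ (N ⊔ Nperp)) =
      (Matrix.of fun i j => B (bN i : Fin n → ℤ) (bN j : Fin n → ℤ)).det.natAbs := by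
    rw [Nat.card_congr eq1.toEquiv, cardQuotRange, Matrix.det_transpose]
  refine ⟨hcard1, ?_⟩
  -- finiteness of the quotient
  have hfin : Finite ((Fin n → ℤ) ⧸ (N ⊔ Nperp)) := by
    apply Nat.finite_of_card_ne_zero
    rw [hcard1]
    exact Int.natAbs_ne_zero.mpr hnd
  have htor : ∀ y : Fin n → ℤ, ∃ c : ℤ, c ≠ 0 ∧ c • y ∈ N ⊔ Nperp := by
    intro y
    have h1 : IsOfFinAddOrder (Submodule.Quotient.mk (p := N ⊔ Nperp) y) :=
      isOfFinAddOrder_of_finite _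
    refine ⟨(addOrderOf (Submodule.Quotient.mk (p := N ⊔ Nperp) y) : ℤ), ?_, ?_⟩
    · exact_mod_cast (addOrderOf_pos_iff.mpr h1).ne'
    · rw [← Submodule.Quotient.mk_eq_zero, Submodule.Quotient.mk_smul, natCast_zsmul]
      exact addOrderOf_nsmul_eq_zero _
  have hsatP : ∀ (m : Fin n → ℤ) (k : ℤ), k ≠ 0 → k • m ∈ Nperp → m ∈ Nperp := by
    intro m k hk hkm
    rw [hperp] at hkm ⊢
    intro x hx
    have h2 := hkm x hx
    rw [map_smul, LinearMap.smul_apply, smul_eq_mul] at h2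
    rcases mul_eq_zero.mp h2 with h | h
    · exact absurd h hk
    · exact h
  have hTN : ∀ m, m ∈ N ↔ ∀ x ∈ Nperp, B m x = 0 := by
    intro m
    constructor
    · intro hm x hx
      rw [hsymm]
      exact (hperp x).mp hx m hm
    · intro h
      obtain ⟨d, hd, hdm⟩ := htor m
      rw [Submodule.mem_sup] at hdm
      obtain ⟨x, hx, p, hp, hxp⟩ := hdm
      have hpe : p = d • m - x := by rw [← hxp]; abel
      have hp0 : p = 0 := by
        apply hunimod.1
        rw [map_zero]
        refine LinearMap.ext fun y => ?_
        obtain ⟨c, hc, hcy⟩ := htor y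
        rw [Submodule.mem_sup] at hcy
        obtain ⟨u, hu, v, hv, huv⟩ := hcy
        have hBpu : B p u = 0 := (hperp p).mp hp u hu
        have hBpv : B p v = 0 := by
          rw [hpe, map_sub, map_smul, LinearMap.sub_apply, LinearMap.smul_apply]
          have h1 : B m v = 0 := h v hv
          have h2 : B x v = 0 := by rw [hsymm]; exact (hperp v).mp hv x hx
          rw [h1, h2, smul_zero, sub_zero]
        have hkey : c * B p y = 0 := by
          calc c * B p y = B p (c • y) := by rw [map_smul, smul_eq_mul]
            _ = B p (u + v) := by rw [huv]
            _ = 0 := by rw [map_add, hBpu, hBpv, add_zero]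
        rcases mul_eq_zero.mp hkey with hh | hh
        · exact absurd hh hc
        · simpa using hh
      have hdmN : d • m ∈ N := by
        rw [← hxp, hp0, add_zero]
        exact hx
      exact hsat m d hd hdmN
  obtain ⟨eq2⟩ := auxEquiv B hunimod Nperp N hsatP hTN bP
  have hcard2 : Nat.card ((Fin n → ℤ) ⧸ (Nperp ⊔ N)) =
      (Matrix.of fun i j => B (bP i : Fin n → ℤ) (bP j : Fin n → ℤ)).det.natAbs := by
    rw [Nat.card_congr eq2.toEquiv, cardQuotRange, Matrix.det_transpose]
  rw [← hcard2, sup_comm Nperp N, hcard1]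
end

section
/- Every finite subgroup of GL_n(ℤ) has order bounded by a constant depending only on n; concretely, the reduction map GL_n(ℤ) → GL_n(ℤ/3ℤ) is injective on any finite subgroup, so every finite subgroup of GL_n(ℤ) has order at most |GL_n(ℤ/3ℤ)|. -/
open Finset

private lemma entry_dvd_mul {n : ℕ} {a b : ℤ} {M N : Matrix (Fin n) (Fin n) ℤ}
    (hM : ∀ i j, a ∣ M i j) (hN : ∀ i j, b ∣ N i j) :
    ∀ i j, a * b ∣ (M * N) i j := by
  intro i j
  rw [Matrix.mul_apply]
  exact Finset.dvd_sum fun k _ => mul_dvd_mul (hM i k) (hN k j)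

private lemma entry_dvd_pow {n : ℕ} {a : ℤ} {D : Matrix (Fin n) (Fin n) ℤ}
    (hD : ∀ i j, a ∣ D i j) :
    ∀ m : ℕ, ∀ i j, a ^ (m + 1) ∣ (D ^ (m + 1)) i j := by
  intro m
  induction m with
  | zero => simpa using hD
  | succ m ih =>
    intro i j
    have h1 : D ^ (m + 2) = D ^ (m + 1) * D := by rw [pow_succ]
    have h2 : a ^ (m + 2) = a ^ (m + 1) * a := by rw [pow_succ]
    rw [h1, h2]
    exact entry_dvd_mul ih hD i j

/-- Step for p = 3. -/
private lemma step3 {n : ℕ} {D : Matrix (Fin n) (Fin n) ℤ}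
    (hA : (1 + D) ^ 3 = 1) {k : ℕ} (hk : 1 ≤ k)
    (hD : ∀ i j, (3 : ℤ) ^ k ∣ D i j) :
    ∀ i j, (3 : ℤ) ^ (k + 1) ∣ D i j := by
  have hexp : (1 + D) ^ 3 = 1 + (D + D + D + (D ^ 2 + D ^ 2 + D ^ 2) + D ^ 3) := by
    noncomm_ring
  rw [hA] at hexp
  have hsum : D + D + D + (D ^ 2 + D ^ 2 + D ^ 2) + D ^ 3 = 0 := by
    have := hexp.symm
    rwa [add_eq_left] at this
  intro i j
  have hentry : 3 * D i j + 3 * (D ^ 2) i j + (D ^ 3) i j = 0 := by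
    have := congrArg (fun M : Matrix (Fin n) (Fin n) ℤ => M i j) hsum
    simp only [Matrix.add_apply, Matrix.zero_apply] at this
    linarith
  have h2 : (3 : ℤ) ^ (2 * k) ∣ (D ^ 2) i j := by
    have := entry_dvd_pow hD 1 i j
    rwa [← pow_mul, mul_comm k 2] at this
  have h3 : (3 : ℤ) ^ (3 * k) ∣ (D ^ 3) i j := by
    have := entry_dvd_pow hD 2 i j
    rwa [← pow_mul, mul_comm k 3] at this
  have hdvd : (3 : ℤ) ^ (k + 2) ∣ 3 * D i j := by
    have e1 : (3 : ℤ) ^ (k + 2) ∣ 3 * (D ^ 2) i j := by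
      have : (3 : ℤ) ^ (2 * k + 1) ∣ 3 * (D ^ 2) i j := by
        rw [pow_succ, mul_comm ((3:ℤ) ^ (2*k)) 3]
        exact mul_dvd_mul dvd_rfl h2
      exact dvd_trans (pow_dvd_pow 3 (by omega)) this
    have e2 : (3 : ℤ) ^ (k + 2) ∣ (D ^ 3) i j :=
      dvd_trans (pow_dvd_pow 3 (by omega)) h3
    have heq : 3 * D i j = -(3 * (D ^ 2) i j + (D ^ 3) i j) := by linarith
    rw [heq]
    exact dvd_neg.mpr (dvd_add e1 e2)
  have h' : 3 * (3 : ℤ) ^ (k + 1) ∣ 3 * D i j := by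
    have : (3:ℤ) ^ (k + 2) = 3 * 3 ^ (k + 1) := by ring
    rwa [this] at hdvd
  exact (mul_dvd_mul_iff_left (by norm_num : (3:ℤ) ≠ 0)).mp h'

/-- Step for prime p ≠ 3. -/
private lemma stepp {n : ℕ} {p : ℕ} (hp : p.Prime) (hp3 : p ≠ 3)
    {D : Matrix (Fin n) (Fin n) ℤ}
    (hA : (1 + D) ^ p = 1) {k : ℕ} (hk : 1 ≤ k)
    (hD : ∀ i j, (3 : ℤ) ^ k ∣ D i j) :
    ∀ i j, (3 : ℤ) ^ (k + 1) ∣ D i j := by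
  have hcomm : Commute (D : Matrix (Fin n) (Fin n) ℤ) (1 : Matrix (Fin n) (Fin n) ℤ) :=
    Commute.one_right D
  have hexp := hcomm.add_pow p
  simp only [one_pow, mul_one] at hexp
  rw [add_comm] at hA
  rw [hA] at hexp
  have h2 : 2 ≤ p := hp.two_le
  obtain ⟨q, hq⟩ : ∃ q, p = q + 2 := ⟨p - 2, by omega⟩
  subst hq
  rw [Finset.sum_range_succ', Finset.sum_range_succ'] at hexp
  simp only [pow_zero, Nat.choose_zero_right, Nat.cast_one, one_mul, mul_one] at hexp
  have hsum := hexp.symm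
  rw [add_eq_right] at hsum
  simp only [zero_add, pow_one, Nat.choose_one_right] at hsum
  -- hsum : ∑ i ∈ range (q+1), D^(i+1+1) * ↑C + D * ↑(q+2) = 0
  intro i j
  have hentry := congrArg (fun M : Matrix (Fin n) (Fin n) ℤ => M i j) hsum
  simp only [Matrix.add_apply, Matrix.sum_apply, Matrix.zero_apply] at hentry
  have hcast : ∀ (m c : ℕ), (D ^ m * ((c : ℕ) : Matrix (Fin n) (Fin n) ℤ)) i j
      = (c : ℤ) * (D ^ m) i j := by
    intro m c
    rw [← (Nat.cast_commute (c : ℕ) (D ^ m)).eq, ← nsmul_eq_mul, Matrix.smul_apply,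
      nsmul_eq_mul]
  have hcast1 : (D * (((q + 2 : ℕ)) : Matrix (Fin n) (Fin n) ℤ)) i j
      = ((q + 2 : ℕ) : ℤ) * D i j := by
    have := hcast 1 (q + 2); simpa using this
  rw [hcast1] at hentry
  have hdvdsum : (3 : ℤ) ^ (k + 1) ∣
      ∑ i' ∈ range (q + 1),
        (D ^ (i' + 1 + 1) * (((q + 2).choose (i' + 1 + 1) : ℕ) : Matrix (Fin n) (Fin n) ℤ)) i j := by
    apply Finset.dvd_sum
    intro i' _
    rw [hcast]
    apply Dvd.dvd.mul_left
    have h1 : (3 : ℤ) ^ (k * (i' + 2)) ∣ (D ^ (i' + 2)) i j := by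
      have := entry_dvd_pow hD (i' + 1) i j
      rwa [← pow_mul] at this
    exact dvd_trans (pow_dvd_pow 3 (by nlinarith)) h1
  have hdvd : (3 : ℤ) ^ (k + 1) ∣ ((q + 2 : ℕ) : ℤ) * D i j := by
    have heq : ((q + 2 : ℕ) : ℤ) * D i j = -∑ i' ∈ range (q + 1),
        (D ^ (i' + 1 + 1) * (((q + 2).choose (i' + 1 + 1) : ℕ) : Matrix (Fin n) (Fin n) ℤ)) i j := by
      linarith
    rw [heq]
    exact dvd_neg.mpr hdvdsum
  have hcop : IsCoprime ((3 : ℤ) ^ (k + 1)) ((q + 2 : ℕ) : ℤ) := by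
    have h3p : Nat.Coprime 3 (q + 2) :=
      (Nat.coprime_primes Nat.prime_three hp).mpr (fun h => hp3 h.symm)
    have hc : Nat.Coprime (3 ^ (k + 1)) (q + 2) := Nat.Coprime.pow_left _ h3p
    have := Nat.isCoprime_iff_coprime.mpr hc
    push_cast at this
    exact_mod_cast this
  rw [mul_comm] at hdvd
  exact hcop.dvd_of_dvd_mul_right hdvd

/-- A matrix of prime order congruent to 1 mod 3 is 1. -/
private lemma key {n : ℕ} {p : ℕ} (hp : p.Prime) {A : Matrix (Fin n) (Fin n) ℤ}
    (hA : A ^ p = 1) (h3 : ∀ i j, (3 : ℤ) ∣ (A - 1) i j) : A = 1 := by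
  set D := A - 1 with hDdef
  have hA1 : A = 1 + D := by rw [hDdef]; abel
  rw [hA1] at hA
  have hall : ∀ k : ℕ, 1 ≤ k → ∀ i j, (3 : ℤ) ^ k ∣ D i j := by
    intro k hk
    induction k, hk using Nat.le_induction with
    | base => simpa using h3
    | succ k hk ih =>
      by_cases h : p = 3
      · subst h; exact step3 hA hk ih
      · exact stepp hp h hA hk ih
  have hzero : ∀ i j, D i j = 0 := by
    intro i j
    by_contra hx
    set x := D i j with hxd
    have h1 : (3 : ℤ) ^ (x.natAbs + 1) ∣ |x| := (dvd_abs _ _).mpr (hall _ (by omega) i j)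
    have h2 : (3 : ℤ) ^ (x.natAbs + 1) ≤ |x| := Int.le_of_dvd (abs_pos.mpr hx) h1
    have h3' : (x.natAbs : ℤ) < (3 : ℤ) ^ (x.natAbs + 1) := by
      have : x.natAbs < 3 ^ (x.natAbs + 1) :=
        lt_of_lt_of_le (Nat.lt_pow_self (by norm_num)) (Nat.pow_le_pow_right (by norm_num) (by omega))
      exact_mod_cast this
    rw [Int.abs_eq_natAbs] at h2
    omega
  have : D = 0 := by ext i j; exact hzero i j
  rw [hA1, this, add_zero]

private lemma ker_lemma {n : ℕ} (g : Matrix.GeneralLinearGroup (Fin n) ℤ)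
    (hg : IsOfFinOrder g)
    (h1 : Units.map ((Int.castRingHom (ZMod 3)).mapMatrix.toMonoidHom) g = 1) : g = 1 := by
  by_contra hne
  set m := orderOf g with hm
  have hm0 : 0 < m := hg.orderOf_pos
  have hm1 : m ≠ 1 := fun h => hne (orderOf_eq_one_iff.mp h)
  set p := m.minFac with hpdef
  have hp : p.Prime := Nat.minFac_prime hm1
  set h : Matrix.GeneralLinearGroup (Fin n) ℤ := g ^ (m / p) with hhdef
  have hhp : h ^ p = 1 := by
    rw [hhdef, ← pow_mul, Nat.div_mul_cancel m.minFac_dvd, hm, pow_orderOf_eq_one]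
  have hB : (h : Matrix (Fin n) (Fin n) ℤ) ^ p = 1 := by
    have := congrArg Units.val hhp
    simpa using this
  have hmaph : Units.map ((Int.castRingHom (ZMod 3)).mapMatrix.toMonoidHom) h = 1 := by
    rw [hhdef, map_pow, h1, one_pow]
  have h3 : ∀ i j, (3 : ℤ) ∣ ((h : Matrix (Fin n) (Fin n) ℤ) - 1) i j := by
    have hmat : (Int.castRingHom (ZMod 3)).mapMatrix (h : Matrix (Fin n) (Fin n) ℤ) = 1 := by
      have := congrArg Units.val hmaph
      simpa using this
    have hmat0 : (Int.castRingHom (ZMod 3)).mapMatrix ((h : Matrix (Fin n) (Fin n) ℤ) - 1) = 0 := by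
      rw [map_sub, hmat, map_one, sub_self]
    intro i j
    have := congrArg (fun M => M i j) hmat0
    simp only [RingHom.mapMatrix_apply, Matrix.map_apply, Matrix.zero_apply] at this
    exact (ZMod.intCast_zmod_eq_zero_iff_dvd _ 3).mp this
  have hh1 : h = 1 := Units.ext (by simpa using key hp hB h3)
  have hdvd : m ∣ m / p := orderOf_dvd_of_pow_eq_one (by rw [← hhdef]; exact hh1)
  have hlt : m / p < m := Nat.div_lt_self hm0 hp.one_lt
  have hpos : 0 < m / p := Nat.div_pos (Nat.minFac_le hm0) hp.pos
  have := Nat.le_of_dvd hpos hdvd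
  omega

set_option maxHeartbeats 1000000 in
/-- Minkowski's lemma: reduction mod 3 is injective on any finite subgroup of `GLₙ(ℤ)`,
so every finite subgroup of `GLₙ(ℤ)` has order at most `|GLₙ(ℤ/3ℤ)|`. -/
theorem stmt15 (n : ℕ) (H : Subgroup (Matrix.GeneralLinearGroup (Fin n) ℤ))
    (hH : Finite H) :
    Set.InjOn
      (Units.map ((Int.castRingHom (ZMod 3)).mapMatrix.toMonoidHom))
      (H : Set (Matrix.GeneralLinearGroup (Fin n) ℤ)) ∧
    Nat.card H ≤ Nat.card (Matrix (Fin n) (Fin n) (ZMod 3))ˣ := by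
  have hinj : Set.InjOn
      (Units.map ((Int.castRingHom (ZMod 3)).mapMatrix.toMonoidHom))
      (H : Set (Matrix.GeneralLinearGroup (Fin n) ℤ)) := by
    intro g₁ hg₁ g₂ hg₂ heq
    have hu : g₁ * g₂⁻¹ ∈ H := H.mul_mem hg₁ (H.inv_mem hg₂)
    have hfin : IsOfFinOrder (g₁ * g₂⁻¹) := by
      exact H.subtype.isOfFinOrder (isOfFinOrder_of_finite (⟨g₁ * g₂⁻¹, hu⟩ : H))
    have hmap1 : Units.map ((Int.castRingHom (ZMod 3)).mapMatrix.toMonoidHom) (g₁ * g₂⁻¹) = 1 := by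
      rw [map_mul, map_inv, heq, mul_inv_cancel]
    have := ker_lemma _ hfin hmap1
    exact mul_inv_eq_one.mp this
  refine ⟨hinj, ?_⟩
  have hfininj : Function.Injective
      (fun x : H => Units.map ((Int.castRingHom (ZMod 3)).mapMatrix.toMonoidHom) (x : Matrix.GeneralLinearGroup (Fin n) ℤ)) := by
    intro x y hxy
    exact Subtype.ext (hinj x.2 y.2 hxy)
  exact Nat.card_le_card_of_injective _ hfininj
end
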